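/- Let ψ be a positive measure on [-1,1] and let {W_m} with W_m ∈ Ω_m of exact degree m satisfy: ∫ W_{2n} W_{2m} √(1-x²) dψ = ρ_{2m} δ_{n,m}, ∫ W_{2n+1} W_{2m+1} √(1-x²) dψ = ρ_{2m+1} δ_{n,m}, ∫ W_{2n+1} W_{2m} dψ = 0 for all n, m ≥ 0, with ρ_m > 0. Then for every m ≥ 1 and every F ∈ Ω_{m-1}: ∫_{-1}^{1} F(x) W_m(x) dψ(x) = 0. -/

import Mathlib

open Polynomial Real MeasureTheory
open Set


private lemma coeff_comp_negX (p : ℝ[X]) (k : ℕ) : (p.comp (-X)).coeff k = (-1)^k * p.coeff k := by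
  induction p using Polynomial.induction_on' with
  | add p q hp hq => simp [add_comp, hp, hq]; ring
  | monomial n a =>
    have h : (monomial n a : ℝ[X]).comp (-X) = C ((-1)^n * a) * X^n := by
      rw [monomial_comp]
      rw [show (-X : ℝ[X]) = C (-1) * X by simp]
      rw [mul_pow, ← C_pow, ← mul_assoc, ← C_mul, mul_comm a]
    rw [h, coeff_C_mul, coeff_monomial, coeff_X_pow]
    rcases eq_or_ne n k with rfl | hnk
    · simp
    · simp [hnk, Ne.symm hnk]

private lemma coeff_parity (p : ℝ[X]) (L k : ℕ) (h : ∀ t : ℝ, p.eval (-t) = (-1)^L * p.eval t)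
    (hk : Odd (k + L)) : p.coeff k = 0 := by
  have hcomp : p.comp (-X) = C ((-1:ℝ)^L) * p := by
    apply Polynomial.funext
    intro t
    rw [eval_comp, eval_mul, eval_C, eval_neg, eval_X, h]
  have hco := congrArg (fun q => q.coeff k) hcomp
  simp only [coeff_comp_negX, coeff_C_mul] at hco
  have hne : ((-1:ℝ))^k ≠ (-1)^L := by
    rcases Nat.even_or_odd k with hk2 | hk2
    · have hO : Odd L := by rcases hk with ⟨j, hj⟩; rcases hk2 with ⟨i, hi⟩; exact ⟨j - i, by omega⟩
      simp [hk2.neg_one_pow, hO.neg_one_pow]; norm_num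
    · have hE : Even L := by rcases hk with ⟨j, hj⟩; rcases hk2 with ⟨i, hi⟩; exact ⟨j - i, by omega⟩
      simp [hk2.neg_one_pow, hE.neg_one_pow]; norm_num
  by_contra hc
  exact hne (mul_right_cancel₀ hc hco)

private lemma my_degree_le (p : ℝ[X]) (n : ℕ) (h : ∀ k : ℕ, n < k → p.coeff k = 0) :
    p.degree ≤ (n : ℕ) :=
  (degree_le_iff_coeff_zero p n).2 (by exact_mod_cast h)

private lemma my_degree_lt (p : ℝ[X]) (n : ℕ) (h : ∀ k : ℕ, n ≤ k → p.coeff k = 0) :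
    p.degree < (n : ℕ) := by
  rw [degree_lt_iff_coeff_zero]; exact_mod_cast h

private lemma coeff_of_deg_le (p : ℝ[X]) (n k : ℕ) (h : p.degree ≤ (n:ℕ)) (hk : n < k) :
    p.coeff k = 0 :=
  coeff_eq_zero_of_degree_lt (lt_of_le_of_lt h (by exact_mod_cast hk))

private lemma coeff_of_deg_lt (p : ℝ[X]) (n k : ℕ) (h : p.degree < (n:ℕ)) (hk : n ≤ k) :
    p.coeff k = 0 := by
  apply coeff_eq_zero_of_degree_lt
  exact lt_of_lt_of_le h (by exact_mod_cast hk)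

private lemma coeff_one_sub_sq (q : ℝ[X]) (k : ℕ) (hk : 2 ≤ k) :
    ((1 - X^2) * q).coeff k = q.coeff k - q.coeff (k-2) := by
  have h : (1 - X^2) * q = q - X^2 * q := by ring
  have h2 : (X^2*q).coeff k = q.coeff (k-2) := by
    have hke : k = (k-2) + 2 := by omega
    rw [hke, coeff_X_pow_mul, Nat.add_sub_cancel]
  rw [h, coeff_sub, h2]

private lemma ev_comb (P Q R S T U : ℝ[X]) (c d x : ℝ) (hx : (0:ℝ) ≤ 1 - x^2) :
    (P.eval x + Real.sqrt (1-x^2) * Q.eval x)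
      = ((P - C c * R - C d * ((1-X^2)*U)).eval x
          + Real.sqrt (1-x^2) * (Q - C c * S - C d * T).eval x)
        + c * (R.eval x + Real.sqrt (1-x^2) * S.eval x)
        + d * (Real.sqrt (1-x^2) * (T.eval x + Real.sqrt (1-x^2) * U.eval x)) := by
  have hs : Real.sqrt (1-x^2) * Real.sqrt (1-x^2) = 1 - x^2 := Real.mul_self_sqrt hx
  simp only [eval_sub, eval_mul, eval_C, eval_one, eval_pow, eval_X, eval_add]
  linear_combination (-(d * U.eval x)) * hs

private lemma cont_ev (P Q : ℝ[X]) :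
    Continuous (fun x : ℝ => P.eval x + Real.sqrt (1-x^2) * Q.eval x) := by
  apply P.continuous.add
  exact (Real.continuous_sqrt.comp (continuous_const.sub (continuous_pow 2))).mul Q.continuous

private lemma split3 (ψ : Measure ℝ) [IsFiniteMeasure ψ] (f1 f2 f3 F : ℝ → ℝ) (c d : ℝ)
    (h1 : Continuous f1) (h2 : Continuous f2) (h3 : Continuous f3)
    (hF : ∀ x ∈ Icc (-1:ℝ) 1, F x = f1 x + c * f2 x + d * f3 x) :
    ∫ x in Icc (-1:ℝ) 1, F x ∂ψ = (∫ x in Icc (-1:ℝ) 1, f1 x ∂ψ)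
      + c * ∫ x in Icc (-1:ℝ) 1, f2 x ∂ψ + d * ∫ x in Icc (-1:ℝ) 1, f3 x ∂ψ := by
  have hi1 : IntegrableOn f1 (Icc (-1:ℝ) 1) ψ := h1.continuousOn.integrableOn_compact isCompact_Icc
  have hi2 : IntegrableOn (fun x => c * f2 x) (Icc (-1:ℝ) 1) ψ :=
    ((continuous_const.mul h2).continuousOn).integrableOn_compact isCompact_Icc
  have hi3 : IntegrableOn (fun x => d * f3 x) (Icc (-1:ℝ) 1) ψ :=
    ((continuous_const.mul h3).continuousOn).integrableOn_compact isCompact_Icc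
  rw [setIntegral_congr_fun measurableSet_Icc (fun x hx => hF x hx)]
  have e1 : ∫ x in Icc (-1:ℝ) 1, (f1 x + c * f2 x + d * f3 x) ∂ψ
      = (∫ x in Icc (-1:ℝ) 1, (f1 x + c * f2 x) ∂ψ) + ∫ x in Icc (-1:ℝ) 1, d * f3 x ∂ψ :=
    integral_add (hi1.add hi2) hi3
  have e2 : ∫ x in Icc (-1:ℝ) 1, (f1 x + c * f2 x) ∂ψ
      = (∫ x in Icc (-1:ℝ) 1, f1 x ∂ψ) + ∫ x in Icc (-1:ℝ) 1, c * f2 x ∂ψ :=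
    integral_add hi1 hi2
  rw [e1, e2, integral_const_mul, integral_const_mul]

private lemma neg_one_pow_eq' (a b : ℕ) (h : a % 2 = b % 2) : ((-1:ℝ))^a = (-1)^b := by
  rcases Nat.even_or_odd a with ha | ha
  · have hb : Even b := by rw [Nat.even_iff] at *; omega
    rw [ha.neg_one_pow, hb.neg_one_pow]
  · have hb : Odd b := by rw [Nat.odd_iff] at *; omega
    rw [ha.neg_one_pow, hb.neg_one_pow]

private noncomputable def gg (A0 A1 : ℕ → Polynomial ℝ) (j : ℕ) (x : ℝ) : ℝ :=
  (A0 j).eval x + Real.sqrt (1-x^2) * (A1 j).eval x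

private lemma struct (A0 A1 : ℕ → Polynomial ℝ)
    (hA0deg : ∀ k, (A0 k).degree ≤ (k : ℕ)) (hA1deg : ∀ k, (A1 k).degree < (k : ℕ))
    (hA0sym : ∀ k, ∀ t : ℝ, (A0 k).eval (-t) = (-1 : ℝ) ^ k * (A0 k).eval t)
    (hA1sym : ∀ k, ∀ t : ℝ, (A1 k).eval (-t) = (-1 : ℝ) ^ (k + 1) * (A1 k).eval t)
    (L : ℕ) (hL : 1 ≤ L) (P Q : ℝ[X]) (c d : ℝ)
    (hPdeg : P.degree ≤ (L:ℕ)) (hQdeg : Q.degree < (L:ℕ))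
    (hPpar : ∀ t : ℝ, P.eval (-t) = (-1:ℝ)^L * P.eval t)
    (hQpar : ∀ t : ℝ, Q.eval (-t) = (-1:ℝ)^(L+1) * Q.eval t)
    (hPc : P.coeff L = c * (A0 L).coeff L - d * (A1 (L-1)).coeff (L-2))
    (hQc : Q.coeff (L-1) = c * (A1 L).coeff (L-1) + d * (A0 (L-1)).coeff (L-1)) :
    ∃ P' Q' : ℝ[X],
      (∀ x ∈ Icc (-1:ℝ) 1, P.eval x + Real.sqrt (1-x^2) * Q.eval x
         = (P'.eval x + Real.sqrt (1-x^2) * Q'.eval x) + c * gg A0 A1 L x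
           + d * (Real.sqrt (1-x^2) * gg A0 A1 (L-1) x)) ∧
      P'.degree ≤ ((L-2 : ℕ) : ℕ) ∧ Q'.degree < ((L-2:ℕ) : ℕ) ∧
      (∀ t : ℝ, P'.eval (-t) = (-1:ℝ)^(L-2) * P'.eval t) ∧
      (∀ t : ℝ, Q'.eval (-t) = (-1:ℝ)^(L-2+1) * Q'.eval t) ∧
      (L = 1 → P' = 0 ∧ Q' = 0) := by
  have hA10 : A1 0 = 0 := by
    rw [← degree_eq_bot]
    have := hA1deg 0
    simp only [Nat.cast_zero] at this
    exact Nat.WithBot.lt_zero_iff.1 this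
  set P' : ℝ[X] := P - C c * A0 L - C d * ((1-X^2) * A1 (L-1)) with hP'def
  set Q' : ℝ[X] := Q - C c * A1 L - C d * A0 (L-1) with hQ'def
  have hmulco : ∀ k, L ≤ k → ((1-X^2) * A1 (L-1)).coeff k = -(A1 (L-1)).coeff (k-2) := by
    intro k hk
    rcases le_or_gt 2 k with h2 | h2
    · rw [coeff_one_sub_sq _ _ h2,
        coeff_of_deg_lt (A1 (L-1)) (L-1) k (hA1deg (L-1)) (by omega), zero_sub]
    · have hk1 : k = 1 := by omega
      have hL1 : L = 1 := by omega
      subst hk1; rw [hL1]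
      simp [hA10]
  have hP'parL : ∀ t : ℝ, P'.eval (-t) = (-1:ℝ)^L * P'.eval t := by
    intro t
    have hLe : L - 1 + 1 = L := by omega
    have e3 := hA1sym (L-1) t
    rw [hLe] at e3
    simp only [hP'def, eval_sub, eval_mul, eval_C, eval_one, eval_pow, eval_X]
    rw [hPpar t, hA0sym L t, e3]
    ring
  have hQ'parL : ∀ t : ℝ, Q'.eval (-t) = (-1:ℝ)^(L+1) * Q'.eval t := by
    intro t
    have e3 := hA0sym (L-1) t
    have hee : ((-1:ℝ))^(L-1) = (-1)^(L+1) := neg_one_pow_eq' (L-1) (L+1) (by omega)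
    rw [hee] at e3
    simp only [hQ'def, eval_sub, eval_mul, eval_C]
    rw [hQpar t, hA1sym L t, e3]
    ring
  have hP'c : ∀ k, L - 1 ≤ k → P'.coeff k = 0 := by
    intro k hk
    have hco : P'.coeff k
        = P.coeff k - c * (A0 L).coeff k - d * ((1-X^2)*(A1 (L-1))).coeff k := by
      simp [hP'def, coeff_sub, coeff_C_mul]
    have hsplit : k + 1 = L ∨ k = L ∨ L + 1 ≤ k := by omega
    rcases hsplit with h | h | h
    · exact coeff_parity P' L k hP'parL ⟨k, by omega⟩
    · subst h
      rw [hco, hmulco k le_rfl, hPc]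
      ring
    · rw [hco, hmulco k (by omega),
        coeff_of_deg_le P L k hPdeg (by omega),
        coeff_of_deg_le (A0 L) L k (hA0deg L) (by omega),
        coeff_of_deg_lt (A1 (L-1)) (L-1) (k-2) (hA1deg (L-1)) (by omega)]
      ring
  have hQ'c : ∀ k, L - 2 ≤ k → Q'.coeff k = 0 := by
    intro k hk
    have hco : Q'.coeff k
        = Q.coeff k - c * (A1 L).coeff k - d * (A0 (L-1)).coeff k := by
      simp [hQ'def, coeff_sub, coeff_C_mul]
    have hsplit : k + 2 = L ∨ k + 1 = L ∨ L ≤ k := by omega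
    rcases hsplit with h | h | h
    · exact coeff_parity Q' (L+1) k hQ'parL ⟨k+1, by omega⟩
    · have hkL : k = L - 1 := by omega
      subst hkL
      rw [hco, hQc]
      ring
    · rw [hco,
        coeff_of_deg_lt Q L k hQdeg h,
        coeff_of_deg_lt (A1 L) L k (hA1deg L) h,
        coeff_of_deg_le (A0 (L-1)) (L-1) k (hA0deg (L-1)) (by omega)]
      ring
  have hzero : L = 1 → P' = 0 ∧ Q' = 0 := by
    intro h1
    constructor
    · exact Polynomial.ext fun k => by rw [hP'c k (by omega)]; simp
    · exact Polynomial.ext fun k => by rw [hQ'c k (by omega)]; simp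
  refine ⟨P', Q', ?_, ?_, ?_, ?_, ?_, hzero⟩
  · intro x hx
    have hx' : (0:ℝ) ≤ 1 - x^2 := by nlinarith [hx.1, hx.2]
    have := ev_comb P Q (A0 L) (A1 L) (A0 (L-1)) (A1 (L-1)) c d x hx'
    rw [this]
    simp only [gg, hP'def, hQ'def]
  · exact my_degree_le P' (L-2) (fun k hk => hP'c k (by omega))
  · exact my_degree_lt Q' (L-2) (fun k hk => hQ'c k hk)
  · intro t
    rcases eq_or_lt_of_le hL with h1 | h2
    · rw [(hzero h1.symm).1]; simp
    · rw [neg_one_pow_eq' (L-2) L (by omega)]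
      exact hP'parL t
  · intro t
    rcases eq_or_lt_of_le hL with h1 | h2
    · rw [(hzero h1.symm).2]; simp
    · rw [neg_one_pow_eq' (L-2+1) (L+1) (by omega)]
      exact hQ'parL t

/-- If `{W_m}` with `W_m ∈ Ω_m` of exact degree `m` satisfies the
orthogonality relations
`∫ W_{2n} W_{2m} √(1-x²) dψ = ρ_{2m} δ_{n,m}`,
`∫ W_{2n+1} W_{2m+1} √(1-x²) dψ = ρ_{2m+1} δ_{n,m}`,
`∫ W_{2n+1} W_{2m} dψ = 0`, then `∫ F W_m dψ = 0` for every `F ∈ Ω_{m-1}`, `m ≥ 1`. -/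
theorem stmt_11 (ψ : Measure ℝ) [IsFiniteMeasure ψ]
    (W : ℕ → ℝ → ℝ) (A0 A1 : ℕ → Polynomial ℝ) (ρ : ℕ → ℝ)
    (hA0deg : ∀ k, (A0 k).degree ≤ (k : ℕ)) (hA1deg : ∀ k, (A1 k).degree < (k : ℕ))
    (hA0sym : ∀ k, ∀ t : ℝ, (A0 k).eval (-t) = (-1 : ℝ) ^ k * (A0 k).eval t)
    (hA1sym : ∀ k, ∀ t : ℝ, (A1 k).eval (-t) = (-1 : ℝ) ^ (k + 1) * (A1 k).eval t)
    (hdecomp : ∀ k, ∀ x ∈ Set.Icc (-1 : ℝ) 1,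
      W k x = (A0 k).eval x + Real.sqrt (1 - x ^ 2) * (A1 k).eval x)
    (hexact : ∀ k, (A0 k).coeff k ^ 2 + (A1 k).coeff (k - 1) ^ 2 > 0)
    (hρ : ∀ k, 0 < ρ k)
    (horth1 : ∀ n k : ℕ,
      ∫ x in Set.Icc (-1 : ℝ) 1, W (2 * n) x * W (2 * k) x * Real.sqrt (1 - x ^ 2) ∂ψ =
        if n = k then ρ (2 * k) else 0)
    (horth2 : ∀ n k : ℕ,
      ∫ x in Set.Icc (-1 : ℝ) 1,
          W (2 * n + 1) x * W (2 * k + 1) x * Real.sqrt (1 - x ^ 2) ∂ψ =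
        if n = k then ρ (2 * k + 1) else 0)
    (horth3 : ∀ n k : ℕ,
      ∫ x in Set.Icc (-1 : ℝ) 1, W (2 * n + 1) x * W (2 * k) x ∂ψ = 0) :
    ∀ m : ℕ, 1 ≤ m → ∀ B0 B1 : Polynomial ℝ,
      B0.degree ≤ ((m - 1 : ℕ) : ℕ) → B1.degree < ((m - 1 : ℕ) : ℕ) →
      (∀ t : ℝ, B0.eval (-t) = (-1 : ℝ) ^ (m - 1) * B0.eval t) →
      (∀ t : ℝ, B1.eval (-t) = (-1 : ℝ) ^ m * B1.eval t) →
      ∫ x in Set.Icc (-1 : ℝ) 1,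
        (B0.eval x + Real.sqrt (1 - x ^ 2) * B1.eval x) * W m x ∂ψ = 0 := by
  intro m
  induction m using Nat.strong_induction_on with
  | _ m IH =>
  intro hm B0 B1 hdB0 hdB1 hpB0 hpB1
  have hIcc : MeasurableSet (Icc (-1:ℝ) 1) := measurableSet_Icc
  have hWg : ∀ j : ℕ, ∀ x ∈ Icc (-1:ℝ) 1, W j x = gg A0 A1 j x := by
    intro j x hx
    rw [hdecomp j x hx]
    simp [gg]
  have key0 : ∀ a b : ℕ, Odd (a+b) →
      ∫ x in Icc (-1:ℝ) 1, gg A0 A1 a x * gg A0 A1 b x ∂ψ = 0 := by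
    intro a b hab
    rcases Nat.even_or_odd a with ha | ha
    · obtain ⟨n, hn⟩ : Odd b := by rw [Nat.odd_iff] at *; rw [Nat.even_iff] at ha; omega
      obtain ⟨k0, hk0⟩ := ha
      have ha2 : a = 2*k0 := by omega
      rw [← horth3 n k0]
      apply setIntegral_congr_fun hIcc
      intro x hx
      dsimp only
      rw [hWg (2*n+1) x hx, hWg (2*k0) x hx, ha2, hn]
      exact (mul_comm _ _)
    · obtain ⟨n, hn⟩ := ha
      obtain ⟨k0, hk0⟩ : Even b := by rw [Nat.even_iff]; rw [Nat.odd_iff] at *; omega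
      have hb2 : b = 2*k0 := by omega
      rw [← horth3 n k0]
      apply setIntegral_congr_fun hIcc
      intro x hx
      dsimp only
      rw [hWg (2*n+1) x hx, hWg (2*k0) x hx, hn, hb2]
  have key1 : ∀ a b : ℕ, (a + b) % 2 = 0 → a ≠ b →
      ∫ x in Icc (-1:ℝ) 1, Real.sqrt (1-x^2) * (gg A0 A1 a x * gg A0 A1 b x) ∂ψ = 0 := by
    intro a b hab hne
    rcases Nat.even_or_odd a with ha | ha
    · obtain ⟨n, hn⟩ := ha
      obtain ⟨k0, hk0⟩ : Even b := by rw [Nat.even_iff] at *; omega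
      have ha2 : a = 2*n := by omega
      have hb2 : b = 2*k0 := by omega
      have h := horth1 n k0
      rw [if_neg (by omega)] at h
      rw [← h]
      apply setIntegral_congr_fun hIcc
      intro x hx
      dsimp only
      rw [hWg (2*n) x hx, hWg (2*k0) x hx, ha2, hb2]
      ring
    · obtain ⟨n, hn⟩ := ha
      obtain ⟨k0, hk0⟩ : Odd b := by rw [Nat.odd_iff] at *; omega
      have h := horth2 n k0
      rw [if_neg (by omega)] at h
      rw [← h]
      apply setIntegral_congr_fun hIcc
      intro x hx
      dsimp only
      rw [hWg (2*n+1) x hx, hWg (2*k0+1) x hx, hn, hk0]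
      ring
  have key2 : ∀ a : ℕ,
      ∫ x in Icc (-1:ℝ) 1, Real.sqrt (1-x^2) * (gg A0 A1 a x * gg A0 A1 a x) ∂ψ = ρ a := by
    intro a
    rcases Nat.even_or_odd a with ha | ha
    · obtain ⟨n, hn⟩ := ha
      have ha2 : a = 2*n := by omega
      have h := horth1 n n
      rw [if_pos rfl] at h
      rw [ha2, ← h]
      apply setIntegral_congr_fun hIcc
      intro x hx
      dsimp only
      rw [hWg (2*n) x hx]
      ring
    · obtain ⟨n, hn⟩ := ha
      have h := horth2 n n
      rw [if_pos rfl] at h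
      rw [hn, ← h]
      apply setIntegral_congr_fun hIcc
      intro x hx
      dsimp only
      rw [hWg (2*n+1) x hx]
      ring
  have hdet : ∀ L : ℕ, 1 ≤ L → L < m →
      (A0 L).coeff L * (A0 (L-1)).coeff (L-1)
        + (A1 L).coeff (L-1) * (A1 (L-1)).coeff (L-2) ≠ 0 := by
    intro L hL1 hLm h0
    have hex := hexact (L-1)
    rw [show L - 1 - 1 = L - 2 from by omega] at hex
    have hspos : (0:ℝ) < (A0 (L-1)).coeff (L-1)^2 + (A1 (L-1)).coeff (L-2)^2 := hex
    set lam : ℝ := ((A0 (L-1)).coeff (L-1) * (A1 L).coeff (L-1)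
        - (A1 (L-1)).coeff (L-2) * (A0 L).coeff L)
        / ((A0 (L-1)).coeff (L-1)^2 + (A1 (L-1)).coeff (L-2)^2) with hlam
    have ha : (A0 L).coeff L = -(lam * (A1 (L-1)).coeff (L-2)) := by
      rw [hlam]
      field_simp
      linear_combination (A0 (L-1)).coeff (L-1) * h0
    have hb : (A1 L).coeff (L-1) = lam * (A0 (L-1)).coeff (L-1) := by
      rw [hlam]
      field_simp
      linear_combination (A1 (L-1)).coeff (L-2) * h0
    obtain ⟨P', Q', hptw, hdeg1, hdeg2, hpar1, hpar2, hzero⟩ :=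
      struct A0 A1 hA0deg hA1deg hA0sym hA1sym L hL1 (A0 L) (A1 L) 0 lam
        (hA0deg L) (hA1deg L) (hA0sym L) (hA1sym L)
        (by linear_combination ha) (by linear_combination hb)
    have hI : ∫ x in Icc (-1:ℝ) 1,
        (P'.eval x + Real.sqrt (1-x^2) * Q'.eval x) * gg A0 A1 (L-1) x ∂ψ = 0 := by
      rcases eq_or_lt_of_le hL1 with h1 | h2
      · obtain ⟨hp0, hq0⟩ := hzero h1.symm
        simp [hp0, hq0]
      · have hIH := IH (L-1) (by omega) (by omega) P' Q'
          (by rw [show L-1-1 = L-2 from by omega]; exact hdeg1)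
          (by rw [show L-1-1 = L-2 from by omega]; exact hdeg2)
          (by rw [show L-1-1 = L-2 from by omega]; exact hpar1)
          (by rw [show L-1 = L-2+1 from by omega]; exact hpar2)
        rw [← hIH]
        apply setIntegral_congr_fun hIcc
        intro x hx
        dsimp only
        rw [hWg (L-1) x hx]
    have hsplit := split3 ψ
      (fun x => (P'.eval x + Real.sqrt (1-x^2) * Q'.eval x) * gg A0 A1 (L-1) x)
      (fun x => gg A0 A1 L x * gg A0 A1 (L-1) x)
      (fun x => Real.sqrt (1-x^2) * (gg A0 A1 (L-1) x * gg A0 A1 (L-1) x))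
      (fun x => gg A0 A1 L x * gg A0 A1 (L-1) x) 0 lam
      (((cont_ev P' Q').mul (cont_ev (A0 (L-1)) (A1 (L-1)))))
      ((cont_ev (A0 L) (A1 L)).mul (cont_ev (A0 (L-1)) (A1 (L-1))))
      ((Continuous.sqrt (continuous_const.sub (continuous_pow 2))).mul
        ((cont_ev (A0 (L-1)) (A1 (L-1))).mul (cont_ev (A0 (L-1)) (A1 (L-1)))))
      (by
        intro x hx
        have h := hptw x hx
        simp only [gg] at h ⊢
        linear_combination ((A0 (L-1)).eval x + Real.sqrt (1-x^2) * (A1 (L-1)).eval x) * h)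
    rw [key0 L (L-1) ⟨L-1, by omega⟩, hI, key2 (L-1)] at hsplit
    have hlam0 : lam = 0 := by
      have hρp := hρ (L-1)
      have : lam * ρ (L-1) = 0 := by linarith [hsplit]
      rcases mul_eq_zero.1 this with h | h
      · exact h
      · exact absurd h (ne_of_gt hρp)
    have hex2 := hexact L
    rw [ha, hb, hlam0] at hex2
    simp at hex2
  have main : ∀ L : ℕ, ∀ P Q : ℝ[X], P.degree ≤ (L:ℕ) → Q.degree < (L:ℕ) →
      (∀ t:ℝ, P.eval (-t) = (-1:ℝ)^L * P.eval t) →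
      (∀ t:ℝ, Q.eval (-t) = (-1:ℝ)^(L+1) * Q.eval t) →
      L < m → Odd (L + m) →
      ∫ x in Icc (-1:ℝ) 1,
        (P.eval x + Real.sqrt (1-x^2) * Q.eval x) * gg A0 A1 m x ∂ψ = 0 := by
    intro L
    induction L using Nat.strong_induction_on with
    | _ L IHL =>
    intro P Q hPdeg hQdeg hPpar hQpar hLm hodd
    rcases Nat.eq_zero_or_pos L with rfl | hLpos
    · -- base case L = 0
      have hQ0 : Q = 0 := by
        rw [← degree_eq_bot]
        simp only [Nat.cast_zero] at hQdeg
        exact Nat.WithBot.lt_zero_iff.1 hQdeg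
      have hA10 : A1 0 = 0 := by
        rw [← degree_eq_bot]
        have := hA1deg 0
        simp only [Nat.cast_zero] at this
        exact Nat.WithBot.lt_zero_iff.1 this
      have ha0 : (A0 0).coeff 0 ≠ 0 := by
        intro hc
        have h := hexact 0
        rw [hc, hA10] at h
        simp at h
      have hP : P = C (P.coeff 0) := eq_C_of_degree_le_zero (by simpa using hPdeg)
      have h00 : A0 0 = C ((A0 0).coeff 0) := eq_C_of_degree_le_zero (by simpa using hA0deg 0)
      have hg0 : ∀ x : ℝ, gg A0 A1 0 x = (A0 0).coeff 0 := by
        intro x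
        simp only [gg]
        rw [h00, hA10]
        simp
      have hconst : ∀ x ∈ Icc (-1:ℝ) 1,
          (P.eval x + Real.sqrt (1-x^2) * Q.eval x) * gg A0 A1 m x
            = (P.coeff 0 / (A0 0).coeff 0) * (gg A0 A1 0 x * gg A0 A1 m x) := by
        intro x hx
        rw [hQ0, hg0 x]
        conv_lhs => rw [hP]
        simp only [eval_C, eval_zero, mul_zero, add_zero]
        field_simp
      rw [setIntegral_congr_fun hIcc hconst, integral_const_mul,
        key0 0 m (by simpa using hodd), mul_zero]
    · -- step case L ≥ 1
      have hΔ := hdet L hLpos hLm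
      set c : ℝ := (P.coeff L * (A0 (L-1)).coeff (L-1) + Q.coeff (L-1) * (A1 (L-1)).coeff (L-2))
        / ((A0 L).coeff L * (A0 (L-1)).coeff (L-1) + (A1 L).coeff (L-1) * (A1 (L-1)).coeff (L-2))
        with hc
      set d : ℝ := ((A0 L).coeff L * Q.coeff (L-1) - (A1 L).coeff (L-1) * P.coeff L)
        / ((A0 L).coeff L * (A0 (L-1)).coeff (L-1) + (A1 L).coeff (L-1) * (A1 (L-1)).coeff (L-2))
        with hd
      have hc1 : P.coeff L = c * (A0 L).coeff L - d * (A1 (L-1)).coeff (L-2) := by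
        rw [hc, hd, div_mul_eq_mul_div, div_mul_eq_mul_div, div_sub_div_same, eq_div_iff hΔ]
        ring
      have hc2 : Q.coeff (L-1) = c * (A1 L).coeff (L-1) + d * (A0 (L-1)).coeff (L-1) := by
        rw [hc, hd, div_mul_eq_mul_div, div_mul_eq_mul_div, ← add_div, eq_div_iff hΔ]
        ring
      obtain ⟨P', Q', hptw, hdeg1, hdeg2, hpar1, hpar2, hzero⟩ :=
        struct A0 A1 hA0deg hA1deg hA0sym hA1sym L hLpos P Q c d
          hPdeg hQdeg hPpar hQpar hc1 hc2
      have hI : ∫ x in Icc (-1:ℝ) 1,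
          (P'.eval x + Real.sqrt (1-x^2) * Q'.eval x) * gg A0 A1 m x ∂ψ = 0 := by
        rcases eq_or_lt_of_le (show 1 ≤ L from hLpos) with h1 | h2
        · obtain ⟨hp0, hq0⟩ := hzero h1.symm
          simp [hp0, hq0]
        · exact IHL (L-2) (by omega) P' Q' hdeg1 hdeg2 hpar1 hpar2 (by omega)
            (by obtain ⟨j, hj⟩ := hodd; exact ⟨j-1, by omega⟩)
      have hsplit := split3 ψ
        (fun x => (P'.eval x + Real.sqrt (1-x^2) * Q'.eval x) * gg A0 A1 m x)
        (fun x => gg A0 A1 L x * gg A0 A1 m x)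
        (fun x => Real.sqrt (1-x^2) * (gg A0 A1 (L-1) x * gg A0 A1 m x))
        (fun x => (P.eval x + Real.sqrt (1-x^2) * Q.eval x) * gg A0 A1 m x) c d
        ((cont_ev P' Q').mul (cont_ev (A0 m) (A1 m)))
        ((cont_ev (A0 L) (A1 L)).mul (cont_ev (A0 m) (A1 m)))
        ((Continuous.sqrt (continuous_const.sub (continuous_pow 2))).mul
          ((cont_ev (A0 (L-1)) (A1 (L-1))).mul (cont_ev (A0 m) (A1 m))))
        (by
          intro x hx
          have h := hptw x hx
          simp only [gg] at h ⊢
          linear_combination ((A0 m).eval x + Real.sqrt (1-x^2) * (A1 m).eval x) * h)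
      rw [hI, key0 L m hodd,
        key1 (L-1) m (by rw [Nat.odd_iff] at hodd; omega) (by omega)] at hsplit
      simpa using hsplit
  have hfin := main (m-1) B0 B1 hdB0 hdB1 hpB0
    (by
      intro t
      rw [show m-1+1 = m from by omega]
      exact hpB1 t)
    (by omega) ⟨m-1, by omega⟩
  rw [← hfin]
  apply setIntegral_congr_fun hIcc
  intro x hx
  dsimp only
  rw [hWg m x hx]
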